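/- Suppose that H is a closed subgroup of a paratopological group G of almost countable type. Then the quotient space G/H of left cosets, endowed with the quotient topology, is of almost countable type. -/

import Mathlib

open Set Topology Pointwise

/-- A compact subset `K` of `X` is of countable character in `X` if there is a
countable family of open sets, each containing `K`, such that every open set
containing `K` contains one of them. -/
def CountableChar {X : Type*} [TopologicalSpace X] (K : Set X) : Prop :=
  ∃ U : ℕ → Set X, (∀ n, IsOpen (U n) ∧ K ⊆ U n) ∧
    ∀ V : Set X, IsOpen V → K ⊆ V → ∃ n, U n ⊆ V

/-- A space is of almost countable type if it contains a non-empty compact set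
of countable character in the space. -/
def AlmostCountableType (X : Type*) [TopologicalSpace X] : Prop :=
  ∃ K : Set X, K.Nonempty ∧ IsCompact K ∧ CountableChar K

/-- A space is of almost subcountable type if it contains a non-empty compact
set that is a Gδ-set in the space. -/
def AlmostSubcountableType (X : Type*) [TopologicalSpace X] : Prop :=
  ∃ K : Set X, K.Nonempty ∧ IsCompact K ∧ IsGδ K

/-- A space is of countable type if every compact subset is contained in a
compact subset of countable character in the space. -/
def CountableType (X : Type*) [TopologicalSpace X] : Prop :=
  ∀ F : Set X, IsCompact F → ∃ K : Set X, F ⊆ K ∧ IsCompact K ∧ CountableChar K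

/-- A map is perfect if it is continuous, closed, and has compact fibers. -/
def PerfectMap {X Y : Type*} [TopologicalSpace X] [TopologicalSpace Y] (f : X → Y) : Prop :=
  Continuous f ∧ IsClosedMap f ∧ ∀ y : Y, IsCompact (f ⁻¹' {y})


/-- If `H` is a closed subgroup of a paratopological group `G` of almost
countable type, then the left coset space `G ⧸ H` is of almost countable
type. -/
theorem almostCountableType_quotient {G : Type*} [Group G] [TopologicalSpace G]
    [ContinuousMul G] (H : Subgroup G) (hH : IsClosed (H : Set G))
    (hG : AlmostCountableType G) :
    AlmostCountableType (G ⧸ H) := by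
  obtain ⟨K, hKne, hKc, U, hU, hUbase⟩ := hG
  refine ⟨QuotientGroup.mk '' K, hKne.image _, hKc.image QuotientGroup.continuous_mk,
    fun n => QuotientGroup.mk '' U n, fun n => ⟨QuotientGroup.isOpenMap_coe _ (hU n).1,
      image_mono (hU n).2⟩, fun V hV hKV => ?_⟩
  obtain ⟨n, hn⟩ := hUbase (QuotientGroup.mk ⁻¹' V) (hV.preimage QuotientGroup.continuous_mk)
    ((image_subset_iff).mp hKV)
  exact ⟨n, image_subset_iff.mpr hn⟩
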